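/- Let 2 ≤ r ≤ 8. An element m ∈ M_r lies in the Del Pezzo two-set G_r = {m : ⟨m,k⟩ = −2, ⟨m,m⟩ = 0} if and only if there is a permutation of the coordinates Q_1, …, Q_r after which m equals one of the following (where an entry with Q_j for j > r is only possible when r admits it): (1) H − Q_1; (2) 2H − Q_1 − Q_2 − Q_3 − Q_4 (only r ≥ 4); (3) 3H − 2Q_1 − Q_2 − Q_3 − Q_4 − Q_5 − Q_6 (only r ≥ 6); (4) 4H − 2Q_1 − 2Q_2 − 2Q_3 − Q_4 − Q_5 − Q_6 − Q_7 (only r ≥ 7); (5) 5H − 2Q_1 − 2Q_2 − 2Q_3 − 2Q_4 − 2Q_5 − 2Q_6 − Q_7 (only r ≥ 7); and, only when r = 8: (6) 4H − 3Q_1 − Q_2 − ⋯ − Q_8; (7) 5H − 3Q_1 − 2Q_2 − 2Q_3 − 2Q_4 − Q_5 − Q_6 − Q_7 − Q_8; (8) 6H − 3Q_1 − 3Q_2 − 2Q_3 − 2Q_4 − 2Q_5 − 2Q_6 − Q_7 − Q_8; (9) 7H − 3Q_1 − 3Q_2 − 3Q_3 − 3Q_4 − 2Q_5 − 2Q_6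 − 2Q_7 − Q_8; (10) 7H − 4Q_1 − 3Q_2 − 2Q_3 − 2Q_4 − 2Q_5 − 2Q_6 − 2Q_7 − 2Q_8; (11) 8H − 3Q_1 − 3Q_2 − 3Q_3 − 3Q_4 − 3Q_5 − 3Q_6 − 3Q_7 − Q_8; (12) 8H − 4Q_1 − 3Q_2 − 3Q_3 − 3Q_4 − 3Q_5 − 2Q_6 − 2Q_7 − 2Q_8; (13) 9H − 4Q_1 − 4Q_2 − 3Q_3 − 3Q_4 − 3Q_5 − 3Q_6 − 3Q_7 − 2Q_8; (14) 10H − 4Q_1 − 4Q_2 − 4Q_3 − 4Q_4 − 3Q_5 − 3Q_6 − 3Q_7 − 3Q_8; (15) 11H − 4Q_1 − 4Q_2 − 4Q_3 − 4Q_4 − 4Q_5 − 4Q_6 − 4Q_7 − 3Q_8. -/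

import Mathlib

set_option maxRecDepth 100000
set_option maxHeartbeats 1000000



/-- The Del Pezzo lattice of rank `1 + r`: `ℤ`-vectors with coordinates
`(H, Q_1, …, Q_r)`; coordinate `0` is the coefficient of `H` and coordinate
`i.succ` is the coefficient of `Q_i`. -/
abbrev DP (r : ℕ) := Fin (r + 1) → ℤ

/-- The bilinear form: `⟨H,H⟩ = 1`, `⟨Q_i,Q_i⟩ = -1`, other products of
distinct basis vectors vanish. -/
def dpForm {r : ℕ} (v w : DP r) : ℤ :=
  v 0 * w 0 - ∑ i : Fin r, v i.succ * w i.succ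

/-- The canonical class `k = -3H + Q_1 + ⋯ + Q_r`. -/
def dpK (r : ℕ) : DP r := fun i => if i.val = 0 then -3 else 1

/-- The Del Pezzo two-set `G_r = {m : ⟨m,k⟩ = -2, ⟨m,m⟩ = 0}`. -/
def GSet (r : ℕ) : Set (DP r) := {m | dpForm m (dpK r) = -2 ∧ dpForm m m = 0}

/-- The vector in the Del Pezzo lattice whose coordinates (w.r.t. `H, Q_1, …, Q_r`)
are given by the list `l` (padded with zeros). -/
def ofCoeffs {r : ℕ} (l : List ℤ) : DP r := fun i => l.getD i.val 0

/-- A permutation of `{1,…,r}` acts on the lattice by permuting the basis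
vectors `Q_1, …, Q_r` and fixing `H`. -/
def permAct {r : ℕ} (σ : Equiv.Perm (Fin r)) (m : DP r) : DP r :=
  Fin.cons (m 0) (fun j => m (σ j).succ)

/-! ### Auxiliary machinery -/

/-- Bounded depth-first search for all nondecreasing integer tuples of length `k`
with entries `≥ lo`, sum `s` and sum of squares `q`. -/
def sols : ℕ → ℤ → ℤ → ℤ → List (List ℤ)
  | 0, _, s, q => if s = 0 ∧ q = 0 then [[]] else []
  | k+1, lo, s, q =>
    ((List.range (s / ((k : ℤ)+1) + 1 - max lo (-q)).toNat).map
        (fun n : ℕ => max lo (-q) + (n : ℤ))).flatMap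
      (fun x => if x*x ≤ q then (sols k x (s - x) (q - x*x)).map (x :: ·) else [])

/-- All solutions `d :: xs` with `1 ≤ d ≤ 11`. -/
def allSols (r : ℕ) : List (List ℤ) :=
  (List.range 11).flatMap fun i =>
    (sols r (-200) (2 - 3*((i:ℤ)+1)) (((i:ℤ)+1)*((i:ℤ)+1))).map (((i:ℤ)+1) :: ·)

lemma list_mul_le_sum (l : List ℤ) (x : ℤ) (h : ∀ y ∈ l, x ≤ y) :
    (l.length : ℤ) * x ≤ l.sum := by
  induction l with
  | nil => simp
  | cons a t ih =>
    have h1 := ih (fun y hy => h y (List.mem_cons_of_mem a hy))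
    have h2 := h a (List.mem_cons_self)
    simp only [List.length_cons, List.sum_cons]
    push_cast
    linarith

lemma sqsum_nonneg (l : List ℤ) : 0 ≤ (l.map fun y => y*y).sum := by
  refine List.sum_nonneg ?_
  rintro z hz
  obtain ⟨y, -, rfl⟩ := List.mem_map.1 hz
  simpa using mul_self_nonneg y

/-- Completeness of the search. -/
lemma mem_sols : ∀ (k : ℕ) (lo s q : ℤ) (xs : List ℤ),
    xs.Pairwise (· ≤ ·) → (∀ y ∈ xs, lo ≤ y) → xs.length = k →
    xs.sum = s → (xs.map fun y => y*y).sum = q → xs ∈ sols k lo s q := by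
  intro k
  induction k with
  | zero =>
    intro lo s q xs _ _ hlen hs hq
    rw [List.length_eq_zero_iff] at hlen
    subst hlen
    simp only [List.sum_nil] at hs
    simp only [List.map_nil, List.sum_nil] at hq
    simp [sols, ← hs, ← hq]
  | succ k ih =>
    intro lo s q xs hsort hlo hlen hs hq
    cases xs with
    | nil => simp at hlen
    | cons x t =>
      rw [List.pairwise_cons] at hsort
      obtain ⟨hxt, hsort'⟩ := hsort
      have hlox : lo ≤ x := hlo x List.mem_cons_self
      simp only [List.sum_cons] at hs
      simp only [List.map_cons, List.sum_cons] at hq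
      have htq : (t.map fun y => y*y).sum = q - x*x := by linarith
      have hq0 : 0 ≤ (t.map fun y => y*y).sum := sqsum_nonneg t
      have hxxq : x*x ≤ q := by linarith
      have hqnn : 0 ≤ q := by nlinarith
      have hlbx : -q ≤ x := by nlinarith [sq_nonneg (x+1)]
      have hlen_t : t.length = k := by simpa using hlen
      have hsum_t : t.sum = s - x := by linarith
      have hxk : (t.length : ℤ) * x ≤ t.sum := list_mul_le_sum t x hxt
      have hxub : x ≤ s / ((k : ℤ)+1) := by
        refine (Int.le_ediv_iff_mul_le (by positivity)).2 ?_
        rw [hlen_t] at hxk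
        push_cast
        linarith
      have hlb : max lo (-q) ≤ x := max_le hlox hlbx
      show x :: t ∈ sols (k+1) lo s q
      rw [sols]
      obtain ⟨ub, hub⟩ : ∃ u, s / ((k : ℤ)+1) = u := ⟨_, rfl⟩
      obtain ⟨L, hL⟩ : ∃ L, max lo (-q) = L := ⟨_, rfl⟩
      rw [hub] at hxub
      rw [hL] at hlb
      rw [hub, hL]
      refine List.mem_flatMap.2 ⟨x, ?_, ?_⟩
      · refine List.mem_map.2 ⟨(x - L).toNat, List.mem_range.2 ?_, ?_⟩
        · omega
        · omega
      · rw [if_pos hxxq]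
        exact List.mem_map.2
          ⟨t, ih x (s-x) (q-x*x) t hsort' hxt hlen_t hsum_t htq, rfl⟩

lemma mem_allSols (r : ℕ) (d : ℤ) (xs : List ℤ) (h1 : 1 ≤ d) (h11 : d ≤ 11)
    (h : xs ∈ sols r (-200) (2 - 3*d) (d*d)) : d :: xs ∈ allSols r := by
  refine List.mem_flatMap.2 ⟨d-1, by simp; exact ⟨(d-1).toNat, by omega, by omega⟩, ?_⟩
  have e : (d-1) + 1 = d := by omega
  rw [e]
  exact List.mem_map.2 ⟨xs, h, rfl⟩

lemma getD_ofFn {r : ℕ} (f : Fin r → ℤ) (j : Fin r) :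
    (List.ofFn f).getD j.val 0 = f j := by
  rw [List.getD_eq_getElem _ _ (by simpa using j.isLt)]
  simp

lemma eq_ofCoeffs {r : ℕ} (c : DP r) (x : ℤ) (l : List ℤ)
    (h0 : c 0 = x) (h1 : List.ofFn (fun j : Fin r => c j.succ) = l) :
    c = ofCoeffs (x :: l) := by
  funext i
  refine Fin.cases ?_ (fun j => ?_) i
  · simpa [ofCoeffs] using h0
  · have hj := getD_ofFn (fun j : Fin r => c j.succ) j
    rw [h1] at hj
    show c j.succ = (x :: l).getD (j.succ.val) 0
    rw [Fin.val_succ, List.getD_cons_succ]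
    exact hj.symm

lemma dpForm_permAct {r : ℕ} (σ : Equiv.Perm (Fin r)) (v w : DP r) :
    dpForm (permAct σ v) (permAct σ w) = dpForm v w := by
  unfold dpForm permAct
  simp only [Fin.cons_zero, Fin.cons_succ]
  rw [Equiv.sum_comp σ (fun j : Fin r => v j.succ * w j.succ)]

lemma permAct_dpK {r : ℕ} (σ : Equiv.Perm (Fin r)) : permAct σ (dpK r) = dpK r := by
  funext i
  refine Fin.cases ?_ (fun j => ?_) i
  · rfl
  · simp [permAct, dpK]

lemma permAct_mem_GSet {r : ℕ} (σ : Equiv.Perm (Fin r)) (m : DP r) :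
    permAct σ m ∈ GSet r ↔ m ∈ GSet r := by
  have h1 : dpForm (permAct σ m) (dpK r) = dpForm m (dpK r) := by
    conv_lhs => rw [← permAct_dpK σ]
    exact dpForm_permAct σ m (dpK r)
  have h2 : dpForm (permAct σ m) (permAct σ m) = dpForm m m := dpForm_permAct σ m m
  unfold GSet
  simp only [Set.mem_setOf_eq, h1, h2]

lemma mem_GSet_def {r : ℕ} (m : DP r) (h1 : dpForm m (dpK r) = -2)
    (h2 : dpForm m m = 0) : m ∈ GSet r := ⟨h1, h2⟩

lemma forward (r : ℕ) (h2 : 2 ≤ r) (h8 : r ≤ 8) (c : DP r)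
    (hmono : Monotone (fun j : Fin r => c j.succ)) (hc : c ∈ GSet r) :
    (c = ofCoeffs [1, -1] ∨
     (4 ≤ r ∧ c = ofCoeffs [2, -1, -1, -1, -1]) ∨
     (6 ≤ r ∧ c = ofCoeffs [3, -2, -1, -1, -1, -1, -1]) ∨
     (7 ≤ r ∧ c = ofCoeffs [4, -2, -2, -2, -1, -1, -1, -1]) ∨
     (7 ≤ r ∧ c = ofCoeffs [5, -2, -2, -2, -2, -2, -2, -1]) ∨
     (r = 8 ∧ c = ofCoeffs [4, -3, -1, -1, -1, -1, -1, -1, -1]) ∨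
     (r = 8 ∧ c = ofCoeffs [5, -3, -2, -2, -2, -1, -1, -1, -1]) ∨
     (r = 8 ∧ c = ofCoeffs [6, -3, -3, -2, -2, -2, -2, -1, -1]) ∨
     (r = 8 ∧ c = ofCoeffs [7, -3, -3, -3, -3, -2, -2, -2, -1]) ∨
     (r = 8 ∧ c = ofCoeffs [7, -4, -3, -2, -2, -2, -2, -2, -2]) ∨
     (r = 8 ∧ c = ofCoeffs [8, -3, -3, -3, -3, -3, -3, -3, -1]) ∨
     (r = 8 ∧ c = ofCoeffs [8, -4, -3, -3, -3, -3, -2, -2, -2]) ∨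
     (r = 8 ∧ c = ofCoeffs [9, -4, -4, -3, -3, -3, -3, -3, -2]) ∨
     (r = 8 ∧ c = ofCoeffs [10, -4, -4, -4, -4, -3, -3, -3, -3]) ∨
     (r = 8 ∧ c = ofCoeffs [11, -4, -4, -4, -4, -4, -4, -4, -3])) := by
  obtain ⟨hk, h0⟩ := hc
  obtain ⟨d, hd⟩ : ∃ d, c 0 = d := ⟨_, rfl⟩
  have hsumFin : ∑ j : Fin r, c j.succ = 2 - 3 * d := by
    unfold dpForm dpK at hk
    simp only [Fin.val_succ, Fin.val_zero, if_true, Nat.succ_ne_zero, if_false,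
      mul_one, Nat.add_eq_zero] at hk
    rw [hd] at hk
    linarith
  have hsqFin : ∑ j : Fin r, c j.succ * c j.succ = d * d := by
    unfold dpForm at h0
    rw [hd] at h0
    linarith
  -- Cauchy–Schwarz bound on d
  have hCS : (2 - 3*d)^2 ≤ (r : ℤ) * (d*d) := by
    have hcs := sq_sum_le_card_mul_sum_sq
      (s := (Finset.univ : Finset (Fin r))) (f := fun j : Fin r => c j.succ)
    simp only [Finset.card_univ, Fintype.card_fin, pow_two] at hcs
    rw [hsumFin, hsqFin] at hcs
    rw [pow_two]
    exact hcs
  have h8' : (r : ℤ) ≤ 8 := by exact_mod_cast h8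
  have hdd : 0 ≤ d*d := mul_self_nonneg d
  have hCS8 : (2 - 3*d)^2 ≤ 8*(d*d) := le_trans hCS (by nlinarith)
  have hd4 : 4 ≤ 12*d := by nlinarith
  have hd1 : 1 ≤ d := by omega
  have hd11 : d ≤ 11 := by nlinarith
  -- list form
  obtain ⟨xs, hxs⟩ : ∃ xs, xs = List.ofFn (fun j : Fin r => c j.succ) := ⟨_, rfl⟩
  have hlen : xs.length = r := by simp [hxs]
  have hsum : xs.sum = 2 - 3 * d := by rw [hxs, List.sum_ofFn]; exact hsumFin
  have hsq : (xs.map fun y => y*y).sum = d * d := by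
    rw [hxs, List.map_ofFn, List.sum_ofFn]
    simpa [Function.comp] using hsqFin
  have hsorted : xs.Pairwise (· ≤ ·) := by
    rw [hxs]
    exact List.pairwise_ofFn.2 (fun i j hij => hmono hij.le)
  have hlo : ∀ y ∈ xs, (-200 : ℤ) ≤ y := by
    intro y hy
    have h1 : y*y ∈ xs.map (fun y => y*y) := List.mem_map.2 ⟨y, hy, rfl⟩
    have h2 : y*y ≤ d*d := by
      rw [← hsq]
      refine List.single_le_sum ?_ _ h1
      rintro z hz
      obtain ⟨w, -, rfl⟩ := List.mem_map.1 hz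
      simpa using mul_self_nonneg w
    nlinarith [sq_nonneg (y + 11), mul_nonneg (by linarith : (0:ℤ) ≤ 11 - d)
      (by linarith : (0:ℤ) ≤ d - 1)]
  have hmem : xs ∈ sols r (-200) (2 - 3*d) (d*d) :=
    mem_sols r (-200) _ _ xs hsorted hlo hlen hsum hsq
  have hall : d :: xs ∈ allSols r := mem_allSols r d xs hd1 hd11 hmem
  clear hmono hk h0 hsumFin hsqFin hCS hCS8 hd4 hd1 hd11 h8' hdd hsum hsq hsorted
    hlo hmem hlen
  interval_cases r
  · -- r = 2
    rw [show allSols 2 = [[1, -1, 0]] from by decide] at hall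
    simp only [List.mem_cons, List.mem_singleton, List.not_mem_nil, or_false] at hall
    have h := hall
    injection h with h1 h2
    left
    refine (eq_ofCoeffs c 1 [-1, 0] (hd.trans h1) (hxs.symm.trans h2)).trans ?_
    funext i; fin_cases i <;> rfl
  · -- r = 3
    rw [show allSols 3 = [[1, -1, 0, 0]] from by decide] at hall
    simp only [List.mem_cons, List.mem_singleton, List.not_mem_nil, or_false] at hall
    have h := hall
    injection h with h1 h2
    left
    refine (eq_ofCoeffs c 1 [-1, 0, 0] (hd.trans h1) (hxs.symm.trans h2)).trans ?_
    funext i; fin_cases i <;> rfl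
  · -- r = 4
    rw [show allSols 4 = [[1, -1, 0, 0, 0], [2, -1, -1, -1, -1]] from by decide] at hall
    simp only [List.mem_cons, List.mem_singleton, List.not_mem_nil, or_false] at hall
    rcases hall with h|h
    · injection h with h1 h2
      left
      refine (eq_ofCoeffs c 1 [-1, 0, 0, 0] (hd.trans h1) (hxs.symm.trans h2)).trans ?_
      funext i; fin_cases i <;> rfl
    · injection h with h1 h2
      right; left
      refine ⟨by norm_num, ?_⟩
      refine (eq_ofCoeffs c 2 [-1, -1, -1, -1] (hd.trans h1) (hxs.symm.trans h2)).trans ?_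
      funext i; fin_cases i <;> rfl
  · -- r = 5
    rw [show allSols 5 = [[1, -1, 0, 0, 0, 0], [2, -1, -1, -1, -1, 0]] from by decide] at hall
    simp only [List.mem_cons, List.mem_singleton, List.not_mem_nil, or_false] at hall
    rcases hall with h|h
    · injection h with h1 h2
      left
      refine (eq_ofCoeffs c 1 [-1, 0, 0, 0, 0] (hd.trans h1) (hxs.symm.trans h2)).trans ?_
      funext i; fin_cases i <;> rfl
    · injection h with h1 h2
      right; left
      refine ⟨by norm_num, ?_⟩
      refine (eq_ofCoeffs c 2 [-1, -1, -1, -1, 0] (hd.trans h1) (hxs.symm.trans h2)).trans ?_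
      funext i; fin_cases i <;> rfl
  · -- r = 6
    rw [show allSols 6 = [[1, -1, 0, 0, 0, 0, 0], [2, -1, -1, -1, -1, 0, 0], [3, -2, -1, -1, -1, -1, -1]] from by decide] at hall
    simp only [List.mem_cons, List.mem_singleton, List.not_mem_nil, or_false] at hall
    rcases hall with h|h|h
    · injection h with h1 h2
      left
      refine (eq_ofCoeffs c 1 [-1, 0, 0, 0, 0, 0] (hd.trans h1) (hxs.symm.trans h2)).trans ?_
      funext i; fin_cases i <;> rfl
    · injection h with h1 h2
      right; left
      refine ⟨by norm_num, ?_⟩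
      refine (eq_ofCoeffs c 2 [-1, -1, -1, -1, 0, 0] (hd.trans h1) (hxs.symm.trans h2)).trans ?_
      funext i; fin_cases i <;> rfl
    · injection h with h1 h2
      right; right; left
      refine ⟨by norm_num, ?_⟩
      refine (eq_ofCoeffs c 3 [-2, -1, -1, -1, -1, -1] (hd.trans h1) (hxs.symm.trans h2)).trans ?_
      funext i; fin_cases i <;> rfl
  · -- r = 7
    rw [show allSols 7 = [[1, -1, 0, 0, 0, 0, 0, 0], [2, -1, -1, -1, -1, 0, 0, 0], [3, -2, -1, -1, -1, -1, -1, 0], [4, -2, -2, -2, -1, -1, -1, -1], [5, -2, -2, -2, -2, -2, -2, -1]] from by decide] at hall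
    simp only [List.mem_cons, List.mem_singleton, List.not_mem_nil, or_false] at hall
    rcases hall with h|h|h|h|h
    · injection h with h1 h2
      left
      refine (eq_ofCoeffs c 1 [-1, 0, 0, 0, 0, 0, 0] (hd.trans h1) (hxs.symm.trans h2)).trans ?_
      funext i; fin_cases i <;> rfl
    · injection h with h1 h2
      right; left
      refine ⟨by norm_num, ?_⟩
      refine (eq_ofCoeffs c 2 [-1, -1, -1, -1, 0, 0, 0] (hd.trans h1) (hxs.symm.trans h2)).trans ?_
      funext i; fin_cases i <;> rfl
    · injection h with h1 h2
      right; right; left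
      refine ⟨by norm_num, ?_⟩
      refine (eq_ofCoeffs c 3 [-2, -1, -1, -1, -1, -1, 0] (hd.trans h1) (hxs.symm.trans h2)).trans ?_
      funext i; fin_cases i <;> rfl
    · injection h with h1 h2
      right; right; right; left
      refine ⟨by norm_num, ?_⟩
      refine (eq_ofCoeffs c 4 [-2, -2, -2, -1, -1, -1, -1] (hd.trans h1) (hxs.symm.trans h2)).trans ?_
      funext i; fin_cases i <;> rfl
    · injection h with h1 h2
      right; right; right; right; left
      refine ⟨by norm_num, ?_⟩
      refine (eq_ofCoeffs c 5 [-2, -2, -2, -2, -2, -2, -1] (hd.trans h1) (hxs.symm.trans h2)).trans ?_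
      funext i; fin_cases i <;> rfl
  · -- r = 8
    rw [show allSols 8 = [[1, -1, 0, 0, 0, 0, 0, 0, 0], [2, -1, -1, -1, -1, 0, 0, 0, 0], [3, -2, -1, -1, -1, -1, -1, 0, 0], [4, -3, -1, -1, -1, -1, -1, -1, -1], [4, -2, -2, -2, -1, -1, -1, -1, 0], [5, -3, -2, -2, -2, -1, -1, -1, -1], [5, -2, -2, -2, -2, -2, -2, -1, 0], [6, -3, -3, -2, -2, -2, -2, -1, -1], [7, -4, -3, -2, -2, -2, -2, -2, -2], [7, -3, -3, -3, -3, -2, -2, -2, -1], [8, -4, -3, -3, -3, -3, -2, -2, -2], [8, -3, -3, -3, -3, -3, -3, -3, -1], [9, -4, -4, -3, -3, -3, -3, -3, -2], [10, -4, -4, -4, -4, -3, -3, -3, -3], [11, -4, -4, -4, -4, -4, -4, -4, -3]] from by decide] at hall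
    simp only [List.mem_cons, List.mem_singleton, List.not_mem_nil, or_false] at hall
    rcases hall with h|h|h|h|h|h|h|h|h|h|h|h|h|h|h
    · injection h with h1 h2
      left
      refine (eq_ofCoeffs c 1 [-1, 0, 0, 0, 0, 0, 0, 0] (hd.trans h1) (hxs.symm.trans h2)).trans ?_
      funext i; fin_cases i <;> rfl
    · injection h with h1 h2
      right; left
      refine ⟨by norm_num, ?_⟩
      refine (eq_ofCoeffs c 2 [-1, -1, -1, -1, 0, 0, 0, 0] (hd.trans h1) (hxs.symm.trans h2)).trans ?_
      funext i; fin_cases i <;> rfl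
    · injection h with h1 h2
      right; right; left
      refine ⟨by norm_num, ?_⟩
      refine (eq_ofCoeffs c 3 [-2, -1, -1, -1, -1, -1, 0, 0] (hd.trans h1) (hxs.symm.trans h2)).trans ?_
      funext i; fin_cases i <;> rfl
    · injection h with h1 h2
      right; right; right; right; right; left
      refine ⟨rfl, ?_⟩
      refine (eq_ofCoeffs c 4 [-3, -1, -1, -1, -1, -1, -1, -1] (hd.trans h1) (hxs.symm.trans h2)).trans ?_
      funext i; fin_cases i <;> rfl
    · injection h with h1 h2
      right; right; right; left
      refine ⟨by norm_num, ?_⟩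
      refine (eq_ofCoeffs c 4 [-2, -2, -2, -1, -1, -1, -1, 0] (hd.trans h1) (hxs.symm.trans h2)).trans ?_
      funext i; fin_cases i <;> rfl
    · injection h with h1 h2
      right; right; right; right; right; right; left
      refine ⟨rfl, ?_⟩
      refine (eq_ofCoeffs c 5 [-3, -2, -2, -2, -1, -1, -1, -1] (hd.trans h1) (hxs.symm.trans h2)).trans ?_
      funext i; fin_cases i <;> rfl
    · injection h with h1 h2
      right; right; right; right; left
      refine ⟨by norm_num, ?_⟩
      refine (eq_ofCoeffs c 5 [-2, -2, -2, -2, -2, -2, -1, 0] (hd.trans h1) (hxs.symm.trans h2)).trans ?_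
      funext i; fin_cases i <;> rfl
    · injection h with h1 h2
      right; right; right; right; right; right; right; left
      refine ⟨rfl, ?_⟩
      refine (eq_ofCoeffs c 6 [-3, -3, -2, -2, -2, -2, -1, -1] (hd.trans h1) (hxs.symm.trans h2)).trans ?_
      funext i; fin_cases i <;> rfl
    · injection h with h1 h2
      right; right; right; right; right; right; right; right; right; left
      refine ⟨rfl, ?_⟩
      refine (eq_ofCoeffs c 7 [-4, -3, -2, -2, -2, -2, -2, -2] (hd.trans h1) (hxs.symm.trans h2)).trans ?_
      funext i; fin_cases i <;> rfl
    · injection h with h1 h2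
      right; right; right; right; right; right; right; right; left
      refine ⟨rfl, ?_⟩
      refine (eq_ofCoeffs c 7 [-3, -3, -3, -3, -2, -2, -2, -1] (hd.trans h1) (hxs.symm.trans h2)).trans ?_
      funext i; fin_cases i <;> rfl
    · injection h with h1 h2
      right; right; right; right; right; right; right; right; right; right; right; left
      refine ⟨rfl, ?_⟩
      refine (eq_ofCoeffs c 8 [-4, -3, -3, -3, -3, -2, -2, -2] (hd.trans h1) (hxs.symm.trans h2)).trans ?_
      funext i; fin_cases i <;> rfl
    · injection h with h1 h2
      right; right; right; right; right; right; right; right; right; right; left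
      refine ⟨rfl, ?_⟩
      refine (eq_ofCoeffs c 8 [-3, -3, -3, -3, -3, -3, -3, -1] (hd.trans h1) (hxs.symm.trans h2)).trans ?_
      funext i; fin_cases i <;> rfl
    · injection h with h1 h2
      right; right; right; right; right; right; right; right; right; right; right; right; left
      refine ⟨rfl, ?_⟩
      refine (eq_ofCoeffs c 9 [-4, -4, -3, -3, -3, -3, -3, -2] (hd.trans h1) (hxs.symm.trans h2)).trans ?_
      funext i; fin_cases i <;> rfl
    · injection h with h1 h2
      right; right; right; right; right; right; right; right; right; right; right; right; right; left
      refine ⟨rfl, ?_⟩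
      refine (eq_ofCoeffs c 10 [-4, -4, -4, -4, -3, -3, -3, -3] (hd.trans h1) (hxs.symm.trans h2)).trans ?_
      funext i; fin_cases i <;> rfl
    · injection h with h1 h2
      right; right; right; right; right; right; right; right; right; right; right; right; right; right
      refine ⟨rfl, ?_⟩
      refine (eq_ofCoeffs c 11 [-4, -4, -4, -4, -4, -4, -4, -3] (hd.trans h1) (hxs.symm.trans h2)).trans ?_
      funext i; fin_cases i <;> rfl


/-- Characterization of the Del Pezzo two-set up to permutation of the `Q_i`. -/
theorem mem_GSet_iff (r : ℕ) (h2 : 2 ≤ r) (h8 : r ≤ 8) (m : DP r) :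
    m ∈ GSet r ↔
      ∃ σ : Equiv.Perm (Fin r),
        (permAct σ m = ofCoeffs [1, -1] ∨
         (4 ≤ r ∧ permAct σ m = ofCoeffs [2, -1, -1, -1, -1]) ∨
         (6 ≤ r ∧ permAct σ m = ofCoeffs [3, -2, -1, -1, -1, -1, -1]) ∨
         (7 ≤ r ∧ permAct σ m = ofCoeffs [4, -2, -2, -2, -1, -1, -1, -1]) ∨
         (7 ≤ r ∧ permAct σ m = ofCoeffs [5, -2, -2, -2, -2, -2, -2, -1]) ∨
         (r = 8 ∧ permAct σ m = ofCoeffs [4, -3, -1, -1, -1, -1, -1, -1, -1]) ∨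
         (r = 8 ∧ permAct σ m = ofCoeffs [5, -3, -2, -2, -2, -1, -1, -1, -1]) ∨
         (r = 8 ∧ permAct σ m = ofCoeffs [6, -3, -3, -2, -2, -2, -2, -1, -1]) ∨
         (r = 8 ∧ permAct σ m = ofCoeffs [7, -3, -3, -3, -3, -2, -2, -2, -1]) ∨
         (r = 8 ∧ permAct σ m = ofCoeffs [7, -4, -3, -2, -2, -2, -2, -2, -2]) ∨
         (r = 8 ∧ permAct σ m = ofCoeffs [8, -3, -3, -3, -3, -3, -3, -3, -1]) ∨
         (r = 8 ∧ permAct σ m = ofCoeffs [8, -4, -3, -3, -3, -3, -2, -2, -2]) ∨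
         (r = 8 ∧ permAct σ m = ofCoeffs [9, -4, -4, -3, -3, -3, -3, -3, -2]) ∨
         (r = 8 ∧ permAct σ m = ofCoeffs [10, -4, -4, -4, -4, -3, -3, -3, -3]) ∨
         (r = 8 ∧ permAct σ m = ofCoeffs [11, -4, -4, -4, -4, -4, -4, -4, -3])) := by
  constructor
  · intro hm
    refine ⟨Tuple.sort (fun j : Fin r => m j.succ), ?_⟩
    set σ := Tuple.sort (fun j : Fin r => m j.succ) with hσ
    have hmem : permAct σ m ∈ GSet r := (permAct_mem_GSet σ m).2 hm
    have hmono : Monotone (fun j : Fin r => (permAct σ m) j.succ) := by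
      have he : (fun j : Fin r => permAct σ m j.succ)
          = (fun j : Fin r => m j.succ) ∘ σ := by
        funext j
        simp [permAct, Function.comp]
      rw [he, hσ]
      exact Tuple.monotone_sort _
    exact forward r h2 h8 (permAct σ m) hmono hmem
  · rintro ⟨σ, H⟩
    have key : ∀ l : List ℤ, (ofCoeffs l : DP r) ∈ GSet r →
        permAct σ m = ofCoeffs l → m ∈ GSet r := by
      intro l hmem he
      exact (permAct_mem_GSet σ m).1 (he ▸ hmem)
    rcases H with h|⟨hr,h⟩|⟨hr,h⟩|⟨hr,h⟩|⟨hr,h⟩|⟨hr,h⟩|⟨hr,h⟩|⟨hr,h⟩|⟨hr,h⟩|⟨hr,h⟩|⟨hr,h⟩|⟨hr,h⟩|⟨hr,h⟩|⟨hr,h⟩|⟨hr,h⟩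
    · refine key _ ?_ h
      interval_cases r <;> exact mem_GSet_def _ (by decide) (by decide)
    · refine key _ ?_ h
      interval_cases r <;> exact mem_GSet_def _ (by decide) (by decide)
    · refine key _ ?_ h
      interval_cases r <;> exact mem_GSet_def _ (by decide) (by decide)
    · refine key _ ?_ h
      interval_cases r <;> exact mem_GSet_def _ (by decide) (by decide)
    · refine key _ ?_ h
      interval_cases r <;> exact mem_GSet_def _ (by decide) (by decide)
    · subst hr
      exact key _ (mem_GSet_def _ (by decide) (by decide)) h
    · subst hr
      exact key _ (mem_GSet_def _ (by decide) (by decide)) h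
    · subst hr
      exact key _ (mem_GSet_def _ (by decide) (by decide)) h
    · subst hr
      exact key _ (mem_GSet_def _ (by decide) (by decide)) h
    · subst hr
      exact key _ (mem_GSet_def _ (by decide) (by decide)) h
    · subst hr
      exact key _ (mem_GSet_def _ (by decide) (by decide)) h
    · subst hr
      exact key _ (mem_GSet_def _ (by decide) (by decide)) h
    · subst hr
      exact key _ (mem_GSet_def _ (by decide) (by decide)) h
    · subst hr
      exact key _ (mem_GSet_def _ (by decide) (by decide)) h
    · subst hr
      exact key _ (mem_GSet_def _ (by decide) (by decide)) h
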